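/- arXiv:1810.04900 — 3 statements merged into one kernel-verified Lean document; each statement's English description precedes it below -/
import Mathlib

section
/- Let μ and ν be probability measures on a measurable space (X, 𝒳) admitting densities f and g with respect to a σ-finite measure λ. Define the maximal coupling η on X × X by η(B) = ∫_X 1_B(u,u) min(f(u), g(u)) λ(du) + (1 - ∫ min(f,g) dλ)^{-1} · ∬ 1_B(x,y) (f(x) - min(f,g)(x)) (g(y) - min(f,g)(y)) λ(dx) λ(dy) when ∫ min(f,g) dλ < 1 (and η concentrated on the diagonal otherwise). Then the first marginal of η is μ and the second marginal of η is ν. -/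
open MeasureTheory ENNReal

/-- The maximal coupling of two probability measures with densities `f`, `g`
w.r.t. a σ-finite measure has first marginal `μ` and second marginal `ν`. -/
theorem stmt0 {X : Type*} [MeasurableSpace X] (lam : Measure X) [SigmaFinite lam]
    (f g : X → ℝ≥0∞) (hf : Measurable f) (hg : Measurable g)
    (μ ν : Measure X) [IsProbabilityMeasure μ] [IsProbabilityMeasure ν]
    (hμ : μ = lam.withDensity f) (hν : ν = lam.withDensity g)
    (hlt : ∫⁻ x, min (f x) (g x) ∂lam < 1)
    (η : Measure (X × X))
    (hη : η = (lam.withDensity (fun u => min (f u) (g u))).map (fun u => (u, u))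
        + (1 - ∫⁻ x, min (f x) (g x) ∂lam)⁻¹ •
          ((lam.withDensity (fun x => f x - min (f x) (g x))).prod
            (lam.withDensity (fun y => g y - min (f y) (g y))))) :
    η.map Prod.fst = μ ∧ η.map Prod.snd = ν := by
  set m := ∫⁻ x, min (f x) (g x) ∂lam with hm
  have hmin : Measurable fun x => min (f x) (g x) := hf.min hg
  have hfi : ∫⁻ x, f x ∂lam = 1 := by
    have h := measure_univ (μ := μ)
    rw [hμ, withDensity_apply _ MeasurableSet.univ, setLIntegral_univ] at h
    exact h
  have hgi : ∫⁻ x, g x ∂lam = 1 := by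
    have h := measure_univ (μ := ν)
    rw [hν, withDensity_apply _ MeasurableSet.univ, setLIntegral_univ] at h
    exact h
  have hmne : m ≠ ∞ := (hlt.trans one_lt_top).ne
  have hfsub : ∫⁻ x, f x - min (f x) (g x) ∂lam = 1 - m := by
    rw [lintegral_sub hmin hmne (Filter.Eventually.of_forall fun x => min_le_left _ _), hfi]
  have hgsub : ∫⁻ x, g x - min (f x) (g x) ∂lam = 1 - m := by
    rw [lintegral_sub hmin hmne (Filter.Eventually.of_forall fun x => min_le_right _ _), hgi]
  have h1m0 : (1 : ℝ≥0∞) - m ≠ 0 := (tsub_pos_of_lt hlt).ne'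
  have h1mtop : (1 : ℝ≥0∞) - m ≠ ∞ := (tsub_le_self.trans_lt one_lt_top).ne
  haveI : IsFiniteMeasure (lam.withDensity fun x => f x - min (f x) (g x)) :=
    isFiniteMeasure_withDensity (by rw [hfsub]; exact h1mtop)
  haveI : IsFiniteMeasure (lam.withDensity fun y => g y - min (f y) (g y)) :=
    isFiniteMeasure_withDensity (by rw [hgsub]; exact h1mtop)
  have hdiag : Measurable fun u : X => (u, u) := measurable_id.prodMk measurable_id
  have hAuniv : (lam.withDensity fun x => f x - min (f x) (g x)) Set.univ = 1 - m := by
    rw [withDensity_apply _ MeasurableSet.univ, setLIntegral_univ, hfsub]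
  have hBuniv : (lam.withDensity fun y => g y - min (f y) (g y)) Set.univ = 1 - m := by
    rw [withDensity_apply _ MeasurableSet.univ, setLIntegral_univ, hgsub]
  constructor
  · rw [hη, Measure.map_add _ _ measurable_fst, Measure.map_smul,
      Measure.map_map measurable_fst hdiag, Measure.map_fst_prod, hBuniv]
    have hid : (Prod.fst ∘ fun u : X => (u, u)) = id := rfl
    rw [hid, Measure.map_id, smul_smul, ENNReal.inv_mul_cancel h1m0 h1mtop, one_smul, hμ,
      ← withDensity_add_right _ (show Measurable (fun x => f x - min (f x) (g x)) from hf.sub hmin)]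
    congr 1
    funext x
    exact add_tsub_cancel_of_le (min_le_left _ _)
  · rw [hη, Measure.map_add _ _ measurable_snd, Measure.map_smul,
      Measure.map_map measurable_snd hdiag, Measure.map_snd_prod, hAuniv]
    have hid : (Prod.snd ∘ fun u : X => (u, u)) = id := rfl
    rw [hid, Measure.map_id, smul_smul, ENNReal.inv_mul_cancel h1m0 h1mtop, one_smul, hν,
      ← withDensity_add_right _ (show Measurable (fun y => g y - min (f y) (g y)) from hg.sub hmin)]
    congr 1
    funext x
    exact add_tsub_cancel_of_le (min_le_right _ _)
end

section
/- With the maximal coupling η of μ and ν as above, η of the complement of the diagonal equals the total variation distance between μ and ν, i.e. η({(x,y) : x ≠ y}) = ‖μ − ν‖_tv, where ‖μ − ν‖_tv = sup_{B ∈ 𝒳} |μ(B) − ν(B)| = 1 − ∫ min(f,g) dλ. -/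
open MeasureTheory ENNReal

/-- The maximal coupling gives the complement of the diagonal mass equal to the
total variation distance `sup_B |μ(B) - ν(B)| = 1 - ∫ min(f,g) dλ`. -/
theorem stmt1 {X : Type*} [MeasurableSpace X] (lam : Measure X) [SigmaFinite lam]
    (f g : X → ℝ≥0∞) (hf : Measurable f) (hg : Measurable g)
    (μ ν : Measure X) [IsProbabilityMeasure μ] [IsProbabilityMeasure ν]
    (hμ : μ = lam.withDensity f) (hν : ν = lam.withDensity g)
    (hlt : ∫⁻ x, min (f x) (g x) ∂lam < 1)
    (hdiag : MeasurableSet {p : X × X | p.1 = p.2})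
    (η : Measure (X × X))
    (hη : η = (lam.withDensity (fun u => min (f u) (g u))).map (fun u => (u, u))
        + (1 - ∫⁻ x, min (f x) (g x) ∂lam)⁻¹ •
          ((lam.withDensity (fun x => f x - min (f x) (g x))).prod
            (lam.withDensity (fun y => g y - min (f y) (g y))))) :
    η {p : X × X | p.1 ≠ p.2} = 1 - ∫⁻ x, min (f x) (g x) ∂lam ∧
    (⨆ B ∈ {B : Set X | MeasurableSet B}, max (μ B - ν B) (ν B - μ B))
      = 1 - ∫⁻ x, min (f x) (g x) ∂lam := by
  set m := ∫⁻ x, min (f x) (g x) ∂lam with hm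
  have hmin_meas : Measurable fun x => min (f x) (g x) := hf.min hg
  have hm_ne_top : m ≠ ⊤ := (hlt.trans one_lt_top).ne
  have hfint : ∫⁻ x, f x ∂lam = 1 := by
    have h1 : μ Set.univ = 1 := measure_univ
    rw [hμ, withDensity_apply _ MeasurableSet.univ, setLIntegral_univ] at h1
    exact h1
  have hgint : ∫⁻ x, g x ∂lam = 1 := by
    have h1 : ν Set.univ = 1 := measure_univ
    rw [hν, withDensity_apply _ MeasurableSet.univ, setLIntegral_univ] at h1
    exact h1
  have hsub_f : ∫⁻ x, (f x - min (f x) (g x)) ∂lam = 1 - m := by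
    rw [lintegral_sub hmin_meas hm_ne_top (ae_of_all _ fun x => min_le_left _ _), hfint]
  have hsub_g : ∫⁻ x, (g x - min (f x) (g x)) ∂lam = 1 - m := by
    rw [lintegral_sub hmin_meas hm_ne_top (ae_of_all _ fun x => min_le_right _ _), hgint]
  have h1m_ne_top : (1 : ℝ≥0∞) - m ≠ ⊤ := (tsub_le_self.trans_lt one_lt_top).ne
  have h1m_ne_zero : (1 : ℝ≥0∞) - m ≠ 0 := by
    rw [Ne, tsub_eq_zero_iff_le]
    exact not_le.mpr hlt
  set μ' := lam.withDensity (fun x => f x - min (f x) (g x)) with hμ'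
  set ν' := lam.withDensity (fun y => g y - min (f y) (g y)) with hν'
  have hμ'univ : μ' Set.univ = 1 - m := by
    rw [hμ', withDensity_apply _ MeasurableSet.univ, setLIntegral_univ, hsub_f]
  have hν'univ : ν' Set.univ = 1 - m := by
    rw [hν', withDensity_apply _ MeasurableSet.univ, setLIntegral_univ, hsub_g]
  set A := {x | f x ≤ g x} with hA
  have hAmeas : MeasurableSet A := measurableSet_le hf hg
  have hμ'A : μ' A = 0 := by
    rw [hμ', withDensity_apply _ hAmeas]
    rw [setLIntegral_congr_fun_ae hAmeas (ae_of_all _ fun x hx => by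
      simp only [min_eq_left (show f x ≤ g x from hx), tsub_self] : ∀ᵐ x ∂lam, x ∈ A →
        f x - min (f x) (g x) = (0 : ℝ≥0∞))]
    simp
  have hν'Ac : ν' Aᶜ = 0 := by
    rw [hν', withDensity_apply _ hAmeas.compl]
    rw [setLIntegral_congr_fun_ae hAmeas.compl (ae_of_all _ fun x hx => by
      have : g x ≤ f x := le_of_not_ge (show ¬ f x ≤ g x from hx)
      simp only [min_eq_right this, tsub_self] : ∀ᵐ x ∂lam, x ∈ Aᶜ →
        g x - min (f x) (g x) = (0 : ℝ≥0∞))]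
    simp
  have hdiag_sub : {p : X × X | p.1 = p.2} ⊆ (A ×ˢ Set.univ) ∪ (Set.univ ×ˢ Aᶜ) := by
    rintro ⟨x, y⟩ (hp : x = y)
    by_cases hx : f x ≤ g x
    · exact Or.inl ⟨hx, trivial⟩
    · exact Or.inr ⟨trivial, by rw [← hp]; exact hx⟩
  have hprod_diag : (μ'.prod ν') {p : X × X | p.1 = p.2} = 0 := by
    refine le_antisymm ?_ (zero_le)
    calc (μ'.prod ν') {p : X × X | p.1 = p.2}
        ≤ (μ'.prod ν') ((A ×ˢ Set.univ) ∪ (Set.univ ×ˢ Aᶜ)) := measure_mono hdiag_sub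
      _ ≤ (μ'.prod ν') (A ×ˢ Set.univ) + (μ'.prod ν') (Set.univ ×ˢ Aᶜ) := measure_union_le _ _
      _ = 0 := by rw [Measure.prod_prod, Measure.prod_prod, hμ'A, hν'Ac]; simp
  have hprod_univ : (μ'.prod ν') Set.univ = (1 - m) * (1 - m) := by
    rw [← Set.univ_prod_univ, Measure.prod_prod, hμ'univ, hν'univ]
  have hprod_fin : (μ'.prod ν') {p : X × X | p.1 = p.2} ≠ ⊤ := by
    rw [hprod_diag]; exact zero_ne_top
  have hprod_compl : (μ'.prod ν') {p : X × X | p.1 ≠ p.2} = (1 - m) * (1 - m) := by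
    have : {p : X × X | p.1 ≠ p.2} = {p : X × X | p.1 = p.2}ᶜ := rfl
    rw [this, measure_compl hdiag hprod_fin, hprod_diag, hprod_univ, tsub_zero]
  constructor
  · rw [hη]
    rw [Measure.add_apply, Measure.smul_apply, smul_eq_mul]
    have hmap : ((lam.withDensity (fun u => min (f u) (g u))).map (fun u => (u, u)))
        {p : X × X | p.1 ≠ p.2} = 0 := by
      rw [Measure.map_apply (show Measurable fun u : X => (u, u) from
        measurable_id.prodMk measurable_id)
        (show MeasurableSet {p : X × X | p.1 ≠ p.2} from hdiag.compl)]
      convert measure_empty (μ := lam.withDensity (fun u => min (f u) (g u)))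
      ext x; simp
    rw [hmap, hprod_compl, zero_add, ← mul_assoc,
      ENNReal.inv_mul_cancel h1m_ne_zero h1m_ne_top, one_mul]
  · refine le_antisymm (iSup₂_le fun B hB => ?_) ?_
    · have hBmeas : MeasurableSet B := hB
      have key : ∀ (F G : X → ℝ≥0∞), Measurable F → Measurable G →
          (∀ x, min (f x) (g x) ≤ F x) → (∀ x, min (f x) (g x) ≤ G x) →
          (∫⁻ x, (F x - min (f x) (g x)) ∂lam = 1 - m) →
          (lam.withDensity F) B - (lam.withDensity G) B ≤ 1 - m := by
        intro F G hF hG hFmin hGmin hFsub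
        rw [tsub_le_iff_right, withDensity_apply _ hBmeas, withDensity_apply _ hBmeas]
        calc ∫⁻ x in B, F x ∂lam
            = ∫⁻ x in B, ((F x - min (f x) (g x)) + min (f x) (g x)) ∂lam := by
              refine lintegral_congr fun x => ?_
              rw [tsub_add_cancel_of_le (hFmin x)]
          _ = (∫⁻ x in B, (F x - min (f x) (g x)) ∂lam) + ∫⁻ x in B, min (f x) (g x) ∂lam :=
              lintegral_add_right' _ hmin_meas.aemeasurable
          _ ≤ (1 - m) + ∫⁻ x in B, G x ∂lam := by
              refine add_le_add ?_ (lintegral_mono fun x => hGmin x)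
              exact (setLIntegral_le_lintegral _ _).trans hFsub.le
      rw [hμ, hν]
      exact max_le
        (key f g hf hg (fun x => min_le_left _ _) (fun x => min_le_right _ _) hsub_f)
        (key g f hg hf (fun x => min_le_right _ _) (fun x => min_le_left _ _) hsub_g)
    · set B₀ := {x | g x < f x} with hB₀def
      have hB₀ : MeasurableSet B₀ := measurableSet_lt hg hf
      have key2 : μ B₀ - ν B₀ = 1 - m := by
        rw [hμ, hν, withDensity_apply _ hB₀, withDensity_apply _ hB₀]
        have hgfin : ∫⁻ x in B₀, g x ∂lam ≠ ⊤ :=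
          ((setLIntegral_le_lintegral _ _).trans_lt (by rw [hgint]; exact one_lt_top)).ne
        rw [← lintegral_sub hg hgfin
          ((ae_restrict_iff' hB₀).mpr (ae_of_all _ fun x hx => (hx : g x < f x).le))]
        have hcompl : ∫⁻ x in B₀ᶜ, (f x - min (f x) (g x)) ∂lam = 0 := by
          rw [setLIntegral_congr_fun_ae hB₀.compl (ae_of_all _ fun x hx => by
            have hx' : f x ≤ g x := le_of_not_gt (show ¬ g x < f x from hx)
            simp only [min_eq_left hx', tsub_self] : ∀ᵐ x ∂lam, x ∈ B₀ᶜ →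
              f x - min (f x) (g x) = (0 : ℝ≥0∞))]
          simp
        have hon : ∫⁻ x in B₀, (f x - min (f x) (g x)) ∂lam
            = ∫⁻ x in B₀, (f x - g x) ∂lam :=
          setLIntegral_congr_fun_ae hB₀ (ae_of_all _ fun x hx => by
            rw [min_eq_right (show g x < f x from hx).le])
        rw [← hsub_f, ← lintegral_add_compl (fun x => f x - min (f x) (g x)) hB₀,
          hcompl, add_zero, hon]
      exact le_iSup₂_of_le B₀ hB₀ (key2 ▸ le_max_left _ _)
end

section
/- Let G : X → (0, ‖G‖_∞] be bounded measurable, M a Markov kernel, μ a probability measure with μ(G) > 0, and suppose there exist a set C ⊆ X, constants ε⁻ > 0 and a probability measure ν, such that G(x) M(B)(x) ≥ ε⁻ ν(C ∩ B) for all x ∈ C and measurable B, and μ(C) ≥ c₀ > 0, and inf_{x ∈ C} h(x) ≥ h₀ > 0 for a non-negative measurable h. Then Φ(μ)(h) := μ(G·M(h))/μ(G) ≥ c₀ ε⁻ ν(C) h₀ / ‖G‖_∞. -/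
open MeasureTheory ProbabilityTheory

/-- Lower bound for the Feynman–Kac update on a small set: under the local
minorization `G(x)M(B)(x) ≥ ε⁻ ν(C ∩ B)` on `C`, `μ(C) ≥ c₀ > 0` and
`h ≥ h₀ > 0` on `C`, one has `Φ(μ)(h) = μ(G·M(h))/μ(G) ≥ c₀ ε⁻ ν(C) h₀ / ‖G‖_∞`. -/
theorem stmt19 {X : Type*} [MeasurableSpace X]
    (G : X → ℝ) (hGm : Measurable G) (hGpos : ∀ x, 0 < G x)
    (CG : ℝ) (hCG : 0 < CG) (hGb : ∀ x, G x ≤ CG)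
    (M : Kernel X X) [IsMarkovKernel M]
    (μ : Measure X) [IsProbabilityMeasure μ] (hμG : 0 < ∫ x, G x ∂μ)
    (C : Set X) (hC : MeasurableSet C)
    (ε : ℝ) (hε : 0 < ε) (ν : Measure X) [IsProbabilityMeasure ν]
    (hminor : ∀ x ∈ C, ∀ B : Set X, MeasurableSet B →
      ε * (ν (C ∩ B)).toReal ≤ G x * (M x B).toReal)
    (c₀ : ℝ) (hc₀ : 0 < c₀) (hμC : c₀ ≤ (μ C).toReal)
    (h : X → ℝ) (hhm : Measurable h) (hh0 : ∀ x, 0 ≤ h x)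
    (h₀ : ℝ) (hh₀ : 0 < h₀) (hinf : ∀ x ∈ C, h₀ ≤ h x)
    (hint : ∀ x, Integrable h (M x))
    (hint2 : Integrable (fun x => G x * ∫ y, h y ∂(M x)) μ) :
    c₀ * ε * (ν C).toReal * h₀ / CG
      ≤ (∫ x, G x * ∫ y, h y ∂(M x) ∂μ) / (∫ x, G x ∂μ) := by
  set f : X → ℝ := fun x => G x * ∫ y, h y ∂(M x) with hf
  set K : ℝ := ε * (ν C).toReal * h₀ with hK
  have hνC : (0:ℝ) ≤ (ν C).toReal := ENNReal.toReal_nonneg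
  have hKnn : 0 ≤ K := by positivity
  have hfnn : ∀ x, 0 ≤ f x := fun x =>
    mul_nonneg (hGpos x).le (integral_nonneg hh0)
  -- pointwise bound on C
  have hpt : ∀ x ∈ C, K ≤ f x := by
    intro x hx
    have hmin := hminor x hx C hC
    rw [Set.inter_self] at hmin
    have h1 : h₀ * (M x C).toReal ≤ ∫ y, h y ∂(M x) := by
      have e1 : ∫ y in C, (h₀ : ℝ) ∂(M x) = (M x C).toReal * h₀ := by
        simp [smul_eq_mul, Measure.real]
      calc h₀ * (M x C).toReal = ∫ y in C, (h₀ : ℝ) ∂(M x) := by rw [e1]; ring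
        _ ≤ ∫ y in C, h y ∂(M x) := by
            exact setIntegral_mono_on (integrable_const _) ((hint x).integrableOn)
              hC (fun y hy => hinf y hy)
        _ ≤ ∫ y, h y ∂(M x) :=
            setIntegral_le_integral (hint x) (ae_of_all _ hh0)
    calc K = h₀ * (ε * (ν C).toReal) := by ring
      _ ≤ h₀ * (G x * (M x C).toReal) := by
          exact mul_le_mul_of_nonneg_left hmin hh₀.le
      _ = G x * (h₀ * (M x C).toReal) := by ring
      _ ≤ G x * ∫ y, h y ∂(M x) :=
          mul_le_mul_of_nonneg_left h1 (hGpos x).le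
  -- numerator lower bound
  have hnum : c₀ * K ≤ ∫ x, f x ∂μ := by
    have h2 : K * (μ C).toReal ≤ ∫ x in C, f x ∂μ := by
      have := setIntegral_mono_on (μ := μ) (s := C) (f := fun _ => K) (g := f)
        (integrable_const _) (hint2.integrableOn) hC (fun x hx => hpt x hx)
      simpa [smul_eq_mul, mul_comm, Measure.real] using this
    have h3 : ∫ x in C, f x ∂μ ≤ ∫ x, f x ∂μ :=
      setIntegral_le_integral hint2 (ae_of_all _ hfnn)
    have h4 : c₀ * K ≤ K * (μ C).toReal := by
      rw [mul_comm c₀ K]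
      exact mul_le_mul_of_nonneg_left hμC hKnn
    linarith
  -- denominator upper bound
  have hGint : Integrable G μ :=
    (integrable_const CG).mono' hGm.aestronglyMeasurable
      (ae_of_all _ fun x => by
        rw [Real.norm_eq_abs, abs_of_pos (hGpos x)]; exact hGb x)
  have hden : ∫ x, G x ∂μ ≤ CG := by
    calc ∫ x, G x ∂μ ≤ ∫ _, CG ∂μ := integral_mono hGint (integrable_const _) hGb
      _ = CG := by simp
  have hnum0 : 0 ≤ ∫ x, f x ∂μ := le_trans (by positivity) hnum
  have : c₀ * K / CG ≤ (∫ x, f x ∂μ) / (∫ x, G x ∂μ) :=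
    div_le_div₀ hnum0 hnum hμG hden
  calc c₀ * ε * (ν C).toReal * h₀ / CG = c₀ * K / CG := by rw [hK]; ring_nf
    _ ≤ _ := this
end
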